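/- Any discrete probability distribution p on {0,1}^n can be approximated arbitrarily well in Kullback–Leibler divergence by a restricted Boltzmann machine with k+1 hidden units, where k = |supp(p)| is the number of configurations with nonzero probability. That is, for every ε > 0 there exist RBM parameters (real weights and biases, with k+1 hidden units) whose marginal visible distribution q satisfies D_KL(p ‖ q) < ε. -/

import Mathlib

def bval (t : Bool) : ℝ := if t then 1 else 0

lemma bval_nonneg (t : Bool) : 0 ≤ bval t := by cases t <;> norm_num [bval]

lemma sum_exp_bval (m : ℕ) (c : Fin m → ℝ) :
    ∑ h : Fin m → Bool, Real.exp (∑ j, c j * bval (h j))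
      = ∏ j, (1 + Real.exp (c j)) := by
  have h1 : ∀ h : Fin m → Bool, Real.exp (∑ j, c j * bval (h j))
      = ∏ j, (fun (j : Fin m) (t : Bool) => Real.exp (c j * bval t)) j (h j) := by
    intro h; rw [Real.exp_sum]
  rw [Finset.sum_congr rfl (fun h _ => h1 h),
    ← Fintype.prod_sum (fun (j : Fin m) (t : Bool) => Real.exp (c j * bval t))]
  apply Finset.prod_congr rfl
  intro j _
  rw [Fintype.sum_bool]
  simp [bval, add_comm]

/-- Hamming-distance-like quantity. -/
noncomputable def hamm (n : ℕ) (v w : Fin n → Bool) : ℝ :=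
  ∑ i, (bval (v i) + bval (w i) - 2 * bval (v i) * bval (w i))

lemma hamm_term_cases (x y : Bool) :
    bval x + bval y - 2 * bval x * bval y = if x = y then 0 else 1 := by
  cases x <;> cases y <;> norm_num [bval]

lemma hamm_nonneg (n : ℕ) (v w : Fin n → Bool) : 0 ≤ hamm n v w := by
  apply Finset.sum_nonneg
  intro i _
  rw [hamm_term_cases]
  split <;> norm_num

lemma hamm_self (n : ℕ) (v : Fin n → Bool) : hamm n v v = 0 := by
  unfold hamm
  apply Finset.sum_eq_zero
  intro i _
  rw [hamm_term_cases, if_pos rfl]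

lemma hamm_ge_one (n : ℕ) (v w : Fin n → Bool) (hvw : v ≠ w) : 1 ≤ hamm n v w := by
  obtain ⟨i, hi⟩ : ∃ i, v i ≠ w i := by
    by_contra hc
    push_neg at hc
    exact hvw (funext hc)
  have h1 : bval (v i) + bval (w i) - 2 * bval (v i) * bval (w i) = 1 := by
    rw [hamm_term_cases, if_neg hi]
  calc (1:ℝ) = bval (v i) + bval (w i) - 2 * bval (v i) * bval (w i) := h1.symm
    _ ≤ hamm n v w := by
        apply Finset.single_le_sum (f := fun i => bval (v i) + bval (w i) - 2 * bval (v i) * bval (w i))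
          (fun i _ => by rw [hamm_term_cases]; split <;> norm_num) (Finset.mem_univ i)

set_option maxHeartbeats 2000000 in
open scoped Classical in
theorem rbm_universal_approximation (n : ℕ) (p : (Fin n → Bool) → ℝ)
    (hp0 : ∀ v, 0 ≤ p v) (hp1 : ∑ v, p v = 1)
    (k : ℕ) (hk : k = (Finset.univ.filter (fun v => p v ≠ 0)).card) :
    ∀ ε > 0, ∃ (a : Fin n → ℝ) (b : Fin (k + 1) → ℝ) (W : Fin n → Fin (k + 1) → ℝ),
      let G : (Fin n → Bool) → ℝ := fun v =>
        ∑ h : Fin (k + 1) → Bool,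
          Real.exp (∑ i, a i * bval (v i) + ∑ j, b j * bval (h j)
            + ∑ i, ∑ j, bval (v i) * W i j * bval (h j));
      let Z : ℝ := ∑ v, G v;
      let q : (Fin n → Bool) → ℝ := fun v => G v / Z;
      (∑ v, if p v = 0 then 0 else p v * Real.log (p v / q v)) < ε := by
  intro ε hε
  -- support
  set S : Finset (Fin n → Bool) := Finset.univ.filter (fun v => p v ≠ 0) with hS
  -- enumeration of the support
  have hkS : k = S.card := hk
  have hp_le_one : ∀ v, p v ≤ 1 := by
    intro v
    rw [← hp1]
    exact Finset.single_le_sum (fun w _ => hp0 w) (Finset.mem_univ v)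
  have hk_pos : 0 < k := by
    rcases Nat.eq_zero_or_pos k with h0 | h
    · exfalso
      have hScard : S.card = 0 := by omega
      have hSempty : S = ∅ := Finset.card_eq_zero.mp hScard
      have : ∀ v, p v = 0 := by
        intro v
        by_contra hv
        have : v ∈ S := by simp [hS, hv]
        simp [hSempty] at this
      rw [Finset.sum_congr rfl (fun v _ => this v)] at hp1
      simp at hp1
    · exact h
  have e : S ≃ Fin k := (Finset.equivFin S).trans (finCongr hkS.symm)
  set u : Fin k → (Fin n → Bool) := fun j => (e.symm j : Fin n → Bool) with hu
  have hu_mem : ∀ j, u j ∈ S := fun j => (e.symm j).2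
  have hu_pos : ∀ j, 0 < p (u j) := by
    intro j
    have := hu_mem j
    rw [hS, Finset.mem_filter] at this
    exact lt_of_le_of_ne (hp0 _) (Ne.symm this.2)
  have hu_inj : Function.Injective u := by
    intro j1 j2 h12
    have : (e.symm j1 : { x // x ∈ S }) = e.symm j2 := Subtype.ext h12
    simpa using congrArg e this
  have hu_surj : ∀ v, p v ≠ 0 → ∃ j, u j = v := by
    intro v hv
    have hvS : v ∈ S := by simp [hS, hv]
    exact ⟨e ⟨v, hvS⟩, by simp [hu]⟩
  -- constants
  set δ : ℝ := ε / 4 with hδdef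
  have hδ : 0 < δ := by positivity
  have hexpδ : (1:ℝ) < Real.exp δ := Real.one_lt_exp_iff.mpr hδ
  set C : ℝ := ((2:ℝ)^n + 1) / (Real.exp δ - 1) + 1 with hCdef
  have hC0 : 0 < C := by
    have : 0 < Real.exp δ - 1 := by linarith
    positivity
  have hCineq : (2:ℝ)^n + C ≤ C * Real.exp δ := by
    have h1 : 0 < Real.exp δ - 1 := by linarith
    have h2 : C * (Real.exp δ - 1) = ((2:ℝ)^n + 1) + (Real.exp δ - 1) := by
      rw [hCdef]; field_simp
    nlinarith [h2]
  set L : ℝ := Real.log (C * k / δ + 1) with hLdef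
  have hCk : 0 < C * k / δ := by
    have : (0:ℝ) < k := by exact_mod_cast hk_pos
    positivity
  have hL0 : 0 ≤ L := Real.log_nonneg (by linarith)
  have hexpL : Real.exp (-L) = 1 / (C * k / δ + 1) := by
    rw [hLdef, Real.exp_neg, Real.exp_log (by linarith)]
    ring
  have hkR : (0:ℝ) < (k:ℝ) := by exact_mod_cast hk_pos
  have hLe : C * Real.exp (-L) ≤ δ / k := by
    rw [hexpL]
    rw [mul_one_div, div_le_div_iff₀ (by linarith) hkR]
    have : C * (k:ℝ) = (C * k / δ) * δ := by field_simp
    nlinarith [hCk, hδ]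
  classical
  -- parameters
  set bb : Fin (k+1) → ℝ := fun j =>
    if h : (j:ℕ) < k then Real.log (C * p (u ⟨j, h⟩)) - L * ∑ i, bval (u ⟨j,h⟩ i) else 0 with hbb
  set Wm : Fin n → Fin (k+1) → ℝ := fun i j =>
    if h : (j:ℕ) < k then L * (2 * bval (u ⟨j,h⟩ i) - 1) else 0 with hWm
  refine ⟨fun _ => 0, bb, Wm, ?_⟩
  intro G Z q
  set s : (Fin n → Bool) → Fin (k+1) → ℝ := fun v j => bb j + ∑ i, bval (v i) * Wm i j with hs
  have hGfact : ∀ v, G v = ∏ j, (1 + Real.exp (s v j)) := by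
    intro v
    have h2 : ∀ h : Fin (k+1) → Bool,
        (∑ i, (0:ℝ) * bval (v i) + ∑ j, bb j * bval (h j)
          + ∑ i, ∑ j, bval (v i) * Wm i j * bval (h j)) = ∑ j, s v j * bval (h j) := by
      intro h
      rw [Finset.sum_comm (f := fun i j => bval (v i) * Wm i j * bval (h j))]
      simp only [hs, zero_mul, Finset.sum_const_zero, zero_add, add_mul, Finset.sum_add_distrib,
        Finset.sum_mul]
    show (∑ h : Fin (k+1) → Bool, Real.exp ((∑ i, (0:ℝ) * bval (v i) + ∑ j, bb j * bval (h j)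
          + ∑ i, ∑ j, bval (v i) * Wm i j * bval (h j)))) = _
    rw [Finset.sum_congr rfl (fun h _ => congrArg Real.exp (h2 h))]
    exact sum_exp_bval _ _
  have hGpos : ∀ v, 0 < G v := by
    intro v; rw [hGfact]
    apply Finset.prod_pos; intro j _; positivity
  have hZdef : Z = ∑ v, G v := rfl
  have hZpos : 0 < Z := by
    rw [hZdef]
    exact Finset.sum_pos (fun v _ => hGpos v) Finset.univ_nonempty
  have hs_last : ∀ v, s v (Fin.last k) = 0 := by
    intro v
    simp [hs, hbb, hWm, Fin.val_last]
  have hs_cast : ∀ v (j : Fin k), s v (Fin.castSucc j)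
      = Real.log (C * p (u j)) - L * hamm n v (u j) := by
    intro v j
    have hcond : ((Fin.castSucc j : Fin (k+1)) : ℕ) < k := by simpa using j.isLt
    have hje : (⟨((Fin.castSucc j : Fin (k+1)) : ℕ), hcond⟩ : Fin k) = j := by
      ext; simp
    simp only [hs, hbb, hWm, dif_pos hcond, hje]
    unfold hamm
    have hsum : ∑ i, (bval (v i) * (L * (2 * bval (u j i) - 1)) - L * bval (u j i))
        = ∑ i, - (L * (bval (v i) + bval (u j i) - 2 * bval (v i) * bval (u j i))) :=
      Finset.sum_congr rfl (fun i _ => by ring)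
    rw [Finset.sum_sub_distrib, Finset.sum_neg_distrib] at hsum
    rw [Finset.mul_sum, Finset.mul_sum]
    linarith [hsum]
  have hGlb : ∀ m : Fin k, 2 * (C * p (u m)) ≤ G (u m) := by
    intro m
    rw [hGfact, Fin.prod_univ_castSucc]
    have h1 : ∀ j : Fin k, (1:ℝ) ≤ 1 + Real.exp (s (u m) (Fin.castSucc j)) := by
      intro j
      have := Real.exp_pos (s (u m) (Fin.castSucc j))
      linarith
    have h2 : C * p (u m) ≤ 1 + Real.exp (s (u m) (Fin.castSucc m)) := by
      rw [hs_cast, hamm_self, mul_zero, sub_zero, Real.exp_log (mul_pos hC0 (hu_pos m))]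
      linarith
    have h3 : C * p (u m) ≤ ∏ j : Fin k, (1 + Real.exp (s (u m) (Fin.castSucc j))) := by
      have herase : (1:ℝ) ≤ ∏ j ∈ Finset.univ.erase m,
          (1 + Real.exp (s (u m) (Fin.castSucc j))) := by
        calc (1:ℝ) = ∏ _j ∈ Finset.univ.erase m, (1:ℝ) := by simp
          _ ≤ _ := Finset.prod_le_prod (fun j _ => by norm_num) (fun j _ => h1 j)
      have hsplit := (Finset.mul_prod_erase Finset.univ
        (fun j => 1 + Real.exp (s (u m) (Fin.castSucc j))) (Finset.mem_univ m)).symm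
      rw [hsplit]
      have hfm : (0:ℝ) < 1 + Real.exp (s (u m) (Fin.castSucc m)) := by positivity
      nlinarith [h2, herase, hfm]
    have h4 : (1 + Real.exp (s (u m) (Fin.last k))) = 2 := by
      rw [hs_last]; norm_num
    rw [h4]
    linarith [h3]
  have hGub : ∀ v, G v ≤ (1 + C * p v) * Real.exp δ * 2 := by
    intro v
    rw [hGfact, Fin.prod_univ_castSucc]
    have h4 : (1 + Real.exp (s v (Fin.last k))) = 2 := by
      rw [hs_last]; norm_num
    rw [h4]
    have hA : (∏ j ∈ Finset.univ.filter (fun j => u j = v),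
        (1 + Real.exp (s v (Fin.castSucc j)))) ≤ 1 + C * p v := by
      set t : Finset (Fin k) := Finset.univ.filter (fun j => u j = v) with ht
      have htcard : t.card ≤ 1 := Finset.card_le_one.mpr (fun a ha b hb => by
        rw [ht, Finset.mem_filter] at ha hb
        exact hu_inj (ha.2.trans hb.2.symm))
      rcases Finset.eq_empty_or_nonempty t with h | ⟨m, hm⟩
      · rw [h, Finset.prod_empty]
        nlinarith [hC0, hp0 v]
      · have hts : t = {m} := Finset.eq_singleton_iff_unique_mem.mpr
          ⟨hm, fun x hx => Finset.card_le_one.mp htcard x hx m hm⟩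
        rw [hts, Finset.prod_singleton]
        have humv : u m = v := by
          have := hm
          rw [ht, Finset.mem_filter] at this
          exact this.2
        rw [← humv, hs_cast, hamm_self, mul_zero, sub_zero,
          Real.exp_log (mul_pos hC0 (hu_pos m))]
    have hB : (∏ j ∈ Finset.univ.filter (fun j => ¬ u j = v),
        (1 + Real.exp (s v (Fin.castSucc j)))) ≤ Real.exp δ := by
      have hbound : ∀ j ∈ Finset.univ.filter (fun j => ¬ u j = v),
          (1 + Real.exp (s v (Fin.castSucc j))) ≤ Real.exp (δ / k) := by
        intro j hj
        have hne : u j ≠ v := by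
          have := hj
          rw [Finset.mem_filter] at this
          exact this.2
        have h1 : s v (Fin.castSucc j) ≤ Real.log (C * p (u j)) - L := by
          rw [hs_cast]
          have := hamm_ge_one n v (u j) (fun h => hne h.symm)
          nlinarith [hL0]
        have h2 : Real.exp (s v (Fin.castSucc j)) ≤ C * Real.exp (-L) := by
          calc Real.exp (s v (Fin.castSucc j))
              ≤ Real.exp (Real.log (C * p (u j)) - L) := Real.exp_le_exp.mpr h1
            _ = (C * p (u j)) * Real.exp (-L) := by
                rw [Real.exp_sub, Real.exp_log (mul_pos hC0 (hu_pos j)), Real.exp_neg]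
                ring
            _ ≤ C * Real.exp (-L) :=
                mul_le_mul_of_nonneg_right
                  (mul_le_of_le_one_right hC0.le (hp_le_one (u j))) (Real.exp_pos _).le
        have h3 : Real.exp (s v (Fin.castSucc j)) ≤ δ / (k:ℝ) := le_trans h2 hLe
        have h5 := Real.add_one_le_exp (δ/(k:ℝ))
        linarith [h3, h5]
      calc (∏ j ∈ Finset.univ.filter (fun j => ¬ u j = v),
          (1 + Real.exp (s v (Fin.castSucc j))))
          ≤ ∏ _j ∈ Finset.univ.filter (fun j => ¬ u j = v), Real.exp (δ/(k:ℝ)) :=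
            Finset.prod_le_prod (fun j _ => by positivity) hbound
        _ = Real.exp (δ/(k:ℝ)) ^ (Finset.univ.filter (fun j => ¬ u j = v)).card :=
            Finset.prod_const _
        _ ≤ Real.exp (δ/(k:ℝ)) ^ k := by
            apply pow_le_pow_right₀ (Real.one_le_exp (by positivity))
            calc (Finset.univ.filter (fun j => ¬ u j = v)).card
                ≤ (Finset.univ : Finset (Fin k)).card := Finset.card_filter_le _ _
              _ = k := by simp
        _ = Real.exp δ := by
            rw [← Real.exp_nat_mul]
            congr 1
            field_simp
    calc (∏ j : Fin k, (1 + Real.exp (s v (Fin.castSucc j)))) * 2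
        = ((∏ j ∈ Finset.univ.filter (fun j => u j = v),
            (1 + Real.exp (s v (Fin.castSucc j)))) *
           (∏ j ∈ Finset.univ.filter (fun j => ¬ u j = v),
            (1 + Real.exp (s v (Fin.castSucc j))))) * 2 := by
          rw [Finset.prod_filter_mul_prod_filter_not]
      _ ≤ ((1 + C * p v) * Real.exp δ) * 2 := by
          have hpos1 : (0:ℝ) ≤ ∏ j ∈ Finset.univ.filter (fun j => u j = v),
              (1 + Real.exp (s v (Fin.castSucc j))) :=
            Finset.prod_nonneg (fun j _ => by positivity)
          have hpos2 : (0:ℝ) ≤ ∏ j ∈ Finset.univ.filter (fun j => ¬ u j = v),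
              (1 + Real.exp (s v (Fin.castSucc j))) :=
            Finset.prod_nonneg (fun j _ => by positivity)
          nlinarith [hA, hB, Real.exp_pos δ]
      _ = (1 + C * p v) * Real.exp δ * 2 := by ring
  have hZub : Z ≤ 2 * Real.exp δ * ((2:ℝ)^n + C) := by
    have h1 : Z ≤ ∑ v, (1 + C * p v) * Real.exp δ * 2 := by
      rw [hZdef]
      exact Finset.sum_le_sum (fun v _ => hGub v)
    have h2 : ∑ v, ((1:ℝ) + C * p v) * Real.exp δ * 2
        = ((2:ℝ)^n + C) * Real.exp δ * 2 := by
      rw [← Finset.sum_mul, ← Finset.sum_mul, Finset.sum_add_distrib, ← Finset.mul_sum, hp1,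
        mul_one, Finset.sum_const, Finset.card_univ]
      congr 2
      simp [Fintype.card_fun]
    calc Z ≤ ∑ v, (1 + C * p v) * Real.exp δ * 2 := h1
      _ = ((2:ℝ)^n + C) * Real.exp δ * 2 := h2
      _ = 2 * Real.exp δ * ((2:ℝ)^n + C) := by ring
  have hlog : ∀ v, p v ≠ 0 → Real.log (p v / q v) ≤ 2 * δ := by
    intro v hv
    obtain ⟨m, hm⟩ := hu_surj v hv
    have hpv : 0 < p v := lt_of_le_of_ne (hp0 v) (Ne.symm hv)
    have hqdef : q v = G v / Z := rfl
    have hqv : 0 < q v := by rw [hqdef]; exact div_pos (hGpos v) hZpos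
    rw [Real.log_le_iff_le_exp (div_pos hpv hqv)]
    rw [hqdef, div_div_eq_mul_div, div_le_iff₀ (hGpos v)]
    have e3 : 2 * (C * p v) ≤ G v := hm ▸ hGlb m
    have e4 : Real.exp (2*δ) = Real.exp δ * Real.exp δ := by
      rw [two_mul, Real.exp_add]
    have e5 : 2 * (C * p v) * (Real.exp δ * Real.exp δ) ≤ G v * (Real.exp δ * Real.exp δ) :=
      mul_le_mul_of_nonneg_right e3 (by positivity)
    calc p v * Z ≤ p v * (2 * Real.exp δ * ((2:ℝ)^n + C)) :=
          mul_le_mul_of_nonneg_left hZub hpv.le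
      _ ≤ p v * (2 * Real.exp δ * (C * Real.exp δ)) := by
          apply mul_le_mul_of_nonneg_left _ hpv.le
          apply mul_le_mul_of_nonneg_left hCineq (by positivity)
      _ = 2 * (C * p v) * (Real.exp δ * Real.exp δ) := by ring
      _ ≤ G v * (Real.exp δ * Real.exp δ) := e5
      _ = Real.exp (2*δ) * G v := by rw [e4]; ring
  have hsum_le : (∑ v, if p v = 0 then 0 else p v * Real.log (p v / q v))
      ≤ ∑ v, (if p v = 0 then 0 else p v * (2*δ)) := by
    apply Finset.sum_le_sum
    intro v _
    by_cases hv : p v = 0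
    · simp [hv]
    · simp only [if_neg hv]
      exact mul_le_mul_of_nonneg_left (hlog v hv) (hp0 v)
  have hsum_eq : (∑ v, if p v = 0 then 0 else p v * (2*δ)) = 2*δ := by
    have h1 : ∀ v, (if p v = 0 then (0:ℝ) else p v * (2*δ))
        = (if p v ≠ 0 then p v * (2*δ) else 0) := by
      intro v; by_cases hv : p v = 0 <;> simp [hv]
    rw [Finset.sum_congr rfl (fun v _ => h1 v), ← Finset.sum_filter, ← Finset.sum_mul]
    have hsupp : ∑ v ∈ Finset.univ.filter (fun v => p v ≠ 0), p v = 1 := by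
      rw [← hp1]
      exact Finset.sum_filter_of_ne (fun v _ h => h)
    rw [hsupp, one_mul]
  calc (∑ v, if p v = 0 then 0 else p v * Real.log (p v / q v))
      ≤ 2*δ := by rw [← hsum_eq]; exact hsum_le
    _ < ε := by rw [hδdef]; linarith
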